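/- For any divisor E = E_1 + ⋯ + E_N, where E_1,…,E_N are distinct rational places of F different from P∞, there exists an x-partition of E, i.e. effective divisors U_1,…,U_μ such that: (1) E = U_1 + ⋯ + U_μ; (2) supp U_i ∩ supp U_j = ∅ for i ≠ j; (3) |deg U_i − deg U_j| ≤ 1 for all i, j; and (4) for any E_j, E_k ∈ supp U_i, x(E_j) = x(E_k) if and only if E_j = E_k. -/

import Mathlib

noncomputable section

open Polynomial
attribute [local instance] Classical.propDecidable

/-- Abstract axiomatization of the data of an algebraic function field of one
variable of genus `genus` whose full field of constants is the finite field `Fq`: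
a field `F` of functions, a set of places with their discrete valuations `v`
(normalized so that each valuation is surjective onto `ℤ`; by convention
`v P 0 = 0`), degrees of places, evaluation of functions at rational places,
Riemann–Roch spaces `RRmod A` of divisors `A : Place →₀ ℤ` together with the
statement of the Riemann–Roch theorem tying their dimensions to the genus. -/
structure FnF (Fq : Type) [Field Fq] where
  F : Type
  [fieldF : Field F]
  [algF : Algebra Fq F]
  Place : Type
  v : Place → F → ℤ
  v_zero : ∀ P, v P 0 = 0
  v_mul : ∀ (P : Place) (f g : F), f ≠ 0 → g ≠ 0 → v P (f * g) = v P f + v P g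
  v_add : ∀ (P : Place) (f g : F), f + g ≠ 0 → f ≠ 0 → g ≠ 0 →
    min (v P f) (v P g) ≤ v P (f + g)
  v_neg : ∀ (P : Place) (f : F), v P (-f) = v P f
  v_const : ∀ (P : Place) (c : Fq), v P (algebraMap Fq F c) = 0
  v_surj : ∀ P : Place, ∃ f : F, f ≠ 0 ∧ v P f = 1
  v_finite : ∀ f : F, f ≠ 0 → {P : Place | v P f ≠ 0}.Finite
  fullConstantField : ∀ f : F, f ≠ 0 → (∀ P, 0 ≤ v P f) →
    ∃ c : Fq, f = algebraMap Fq F c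
  degPlace : Place → ℕ
  degPlace_pos : ∀ P, 0 < degPlace P
  eval : Place → F → Fq
  eval_add : ∀ (P : Place) (f g : F), degPlace P = 1 → 0 ≤ v P f → 0 ≤ v P g →
    eval P (f + g) = eval P f + eval P g
  eval_mul : ∀ (P : Place) (f g : F), degPlace P = 1 → 0 ≤ v P f → 0 ≤ v P g →
    eval P (f * g) = eval P f * eval P g
  eval_const : ∀ (P : Place) (c : Fq), degPlace P = 1 →
    eval P (algebraMap Fq F c) = c
  eval_eq_zero_iff : ∀ (P : Place) (f : F), degPlace P = 1 → 0 ≤ v P f →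
    (eval P f = 0 ↔ (f = 0 ∨ 1 ≤ v P f))
  genus : ℕ
  RRmod : (Place →₀ ℤ) → Submodule Fq F
  mem_RRmod : ∀ (A : Place →₀ ℤ) (f : F),
    f ∈ RRmod A ↔ (f = 0 ∨ ∀ P, 0 ≤ v P f + A P)
  riemannRoch_le : ∀ A : Place →₀ ℤ,
    (A.sum fun P n => n * (degPlace P : ℤ)) + 1 - genus ≤
      (Module.finrank Fq (RRmod A) : ℤ)
  riemannRoch_eq : ∀ A : Place →₀ ℤ,
    2 * (genus : ℤ) - 1 ≤ (A.sum fun P n => n * (degPlace P : ℤ)) →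
    (Module.finrank Fq (RRmod A) : ℤ) =
      (A.sum fun P n => n * (degPlace P : ℤ)) + 1 - genus
  RRmod_eq_bot : ∀ A : Place →₀ ℤ,
    (A.sum fun P n => n * (degPlace P : ℤ)) < 0 → RRmod A = ⊥

attribute [instance] FnF.fieldF FnF.algF

namespace FnF

variable {Fq : Type} [Field Fq] (D : FnF Fq)

/-- Divisors of the function field. -/
abbrev Divisor := D.Place →₀ ℤ

/-- The degree of a divisor. -/
def degDiv (A : D.Divisor) : ℤ := A.sum fun P n => n * (D.degPlace P : ℤ)

/-- `Я(A) = ⋃ₘ L(m·P∞ + A)`, the functions whose pole divisor is bounded by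
`A` away from `P∞`. -/
def Ya (Pinf : D.Place) (A : D.Divisor) : Set D.F :=
  {a | ∃ m : ℤ, a ∈ D.RRmod (Finsupp.single Pinf m + A)}

/-- `δ_A(a) = -v_{P∞}(a) - A(P∞)`, the least `m` with `a ∈ L(m·P∞ + A)`
(meaningful for nonzero `a ∈ Я(A)`). -/
def deltaZ (Pinf : D.Place) (A : D.Divisor) (a : D.F) : ℤ :=
  -(D.v Pinf a) - A Pinf

/-- `δ_A(a)` with the convention `δ_A(0) = -∞`. -/
def delta (Pinf : D.Place) (A : D.Divisor) (a : D.F) : WithBot ℤ :=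
  if a = 0 then ⊥ else (D.deltaZ Pinf A a : WithBot ℤ)

/-- The Weierstrass semigroup of a place `P∞`: pole orders at `P∞` of functions
regular away from `P∞`. -/
def WSemigroup (Pinf : D.Place) : Set ℤ :=
  {m | ∃ f : D.F, f ≠ 0 ∧ D.v Pinf f = -m ∧ ∀ P, P ≠ Pinf → 0 ≤ D.v P f}

end FnF


/- ### Auxiliary lemmas -/

lemma countmod (μ : ℕ) (hμ : 0 < μ) (n : ℕ) (i : ℕ) (hi : i < μ) :
    ((Finset.range n).filter fun k => k % μ = i).card
      = n / μ + if i < n % μ then 1 else 0 := by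
  induction n with
  | zero => simp
  | succ n ih =>
    rw [Finset.range_add_one, Finset.filter_insert]
    have hdm := Nat.div_add_mod n μ
    have hcomm : n / μ * μ = μ * (n / μ) := Nat.mul_comm _ _
    have hlt : n % μ < μ := Nat.mod_lt _ hμ
    have hsucc : (n + 1) / μ = (if n % μ + 1 = μ then n / μ + 1 else n / μ) ∧
        (n + 1) % μ = (if n % μ + 1 = μ then 0 else n % μ + 1) := by
      split_ifs with h
      · have heq : n + 1 = μ * (n / μ + 1) := by rw [Nat.mul_succ]; omega
        rw [heq]
        exact ⟨Nat.mul_div_cancel_left _ hμ, Nat.mul_mod_right _ _⟩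
      · have heq : n + 1 = (n % μ + 1) + (n / μ) * μ := by omega
        rw [heq]
        constructor
        · rw [Nat.add_mul_div_right _ _ hμ, Nat.div_eq_of_lt (by omega)]; omega
        · rw [Nat.add_mul_mod_self_right, Nat.mod_eq_of_lt (by omega)]
    obtain ⟨h1, h2⟩ := hsucc
    by_cases h : n % μ = i
    · rw [if_pos h, Finset.card_insert_of_notMem (by simp), ih]
      split_ifs at h1 h2 ⊢ <;> omega
    · rw [if_neg h, ih]
      split_ifs at h1 h2 ⊢ <;> omega

namespace FnF

variable {Fq : Type} [Field Fq] (D : FnF Fq)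

lemma degDiv_add (A B : D.Divisor) : D.degDiv (A + B) = D.degDiv A + D.degDiv B :=
  Finsupp.sum_add_index' (fun _ => zero_mul _) (fun _ b₁ b₂ => add_mul b₁ b₂ _)

lemma degDiv_sub (A B : D.Divisor) : D.degDiv (A - B) = D.degDiv A - D.degDiv B :=
  Finsupp.sum_sub_index (fun _ b₁ b₂ => sub_mul b₁ b₂ _)

lemma degDiv_single (P : D.Place) (n : ℤ) :
    D.degDiv (Finsupp.single P n) = n * (D.degPlace P : ℤ) :=
  Finsupp.sum_single_index (zero_mul _)

lemma degDiv_sum_single {ι : Type} (s : Finset ι) (g : ι → D.Place)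
    (h : ∀ j ∈ s, D.degPlace (g j) = 1) :
    D.degDiv (∑ j ∈ s, Finsupp.single (g j) (1:ℤ)) = s.card := by
  induction s using Finset.cons_induction with
  | empty => simp [FnF.degDiv]
  | cons a s ha ih =>
    rw [Finset.sum_cons, D.degDiv_add, D.degDiv_single, h a (Finset.mem_cons_self a s),
      ih (fun j hj => h j (Finset.mem_cons_of_mem hj)), Finset.card_cons]
    push_cast; ring

end FnF

open FnF in
/-- For any divisor `E = E_1 + ⋯ + E_N`, where `E_1,…,E_N` are distinct
rational places of `F` different from `P∞`, there exists an `x`-partition of `E`, i.e.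
effective divisors `U_1,…,U_μ` such that: (1) `E = U_1 + ⋯ + U_μ`; (2) the supports of the
`U_i` are pairwise disjoint; (3) `|deg U_i − deg U_j| ≤ 1` for all `i, j`; and (4) for any
places `P, Q` in the support of the same `U_i`, `x(P) = x(Q)` iff `P = Q`. -/
theorem exists_x_partition
    {Fq : Type} [Field Fq] [Fintype Fq] (D : FnF Fq)
    (Pinf : D.Place) (hPinf : D.degPlace Pinf = 1)
    (μ : ℕ) (hμpos : 0 < μ) (hμmem : (μ : ℤ) ∈ D.WSemigroup Pinf)
    (hμmin : ∀ m : ℤ, 0 < m → m ∈ D.WSemigroup Pinf → (μ : ℤ) ≤ m)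
    (x : D.F) (hxv : D.v Pinf x = -(μ : ℤ)) (hxreg : ∀ P, P ≠ Pinf → 0 ≤ D.v P x)
    (N : ℕ) (Es : Fin N → D.Place) (hinj : Function.Injective Es)
    (hrat : ∀ j, D.degPlace (Es j) = 1) (hne : ∀ j, Es j ≠ Pinf) :
    ∃ U : Fin μ → D.Divisor,
      (∀ i, ∀ P, 0 ≤ U i P) ∧
      (∑ i, U i) = ∑ j, Finsupp.single (Es j) (1 : ℤ) ∧
      (∀ i j, i ≠ j → Disjoint (U i).support (U j).support) ∧
      (∀ i j, |D.degDiv (U i) - D.degDiv (U j)| ≤ 1) ∧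
      (∀ i, ∀ P ∈ (U i).support, ∀ Q ∈ (U i).support,
        (D.eval P x = D.eval Q x ↔ P = Q)) := by
  classical
  have hai : Function.Injective (algebraMap Fq D.F) := RingHom.injective _
  have hxne : x ≠ 0 := by
    intro h; rw [h, D.v_zero] at hxv; omega
  have hfne : ∀ c : Fq, x - algebraMap Fq D.F c ≠ 0 := by
    intro c h
    have hx : x = algebraMap Fq D.F c := sub_eq_zero.mp h
    rw [hx, D.v_const] at hxv; omega
  have hflow : ∀ (c : Fq) (P : D.Place),
      min (D.v P x) 0 ≤ D.v P (x - algebraMap Fq D.F c) := by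
    intro c P
    by_cases hc : c = 0
    · simp only [hc, map_zero, sub_zero]
      exact min_le_left _ _
    · have hrw : x - algebraMap Fq D.F c = x + algebraMap Fq D.F (-c) := by
        rw [map_neg]; ring
      rw [hrw]
      have hv := D.v_add P x (algebraMap Fq D.F (-c)) (by rw [← hrw]; exact hfne c) hxne
        ((map_ne_zero_iff _ hai).mpr (neg_ne_zero.mpr hc))
      rwa [D.v_const] at hv
  have hfreg : ∀ (c : Fq) (P : D.Place), P ≠ Pinf →
      0 ≤ D.v P (x - algebraMap Fq D.F c) :=
    fun c P hP => le_trans (le_min (hxreg P hP) le_rfl) (hflow c P)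
  have hfPinf : ∀ c : Fq, D.v Pinf (x - algebraMap Fq D.F c) = -(μ : ℤ) := by
    intro c
    have hlow := hflow c Pinf
    rw [hxv] at hlow
    have hup : D.v Pinf (x - algebraMap Fq D.F c) ≤ -(μ : ℤ) := by
      by_cases hc : c = 0
      · simp only [hc, map_zero, sub_zero, hxv, le_refl]
      · have hx' : x = (x - algebraMap Fq D.F c) + algebraMap Fq D.F c := by ring
        have h2 := D.v_add Pinf (x - algebraMap Fq D.F c) (algebraMap Fq D.F c)
          (by rw [← hx']; exact hxne) (hfne c) ((map_ne_zero_iff _ hai).mpr hc)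
        rw [← hx', hxv, D.v_const] at h2
        omega
    omega
  have heval1 : ∀ (c : Fq) (j : Fin N), D.eval (Es j) x = c →
      1 ≤ D.v (Es j) (x - algebraMap Fq D.F c) := by
    intro c j hev
    have h0x : 0 ≤ D.v (Es j) x := hxreg _ (hne j)
    have h0c : 0 ≤ D.v (Es j) (algebraMap Fq D.F (-c)) := by rw [D.v_const]
    have hrw : x - algebraMap Fq D.F c = x + algebraMap Fq D.F (-c) := by
      rw [map_neg]; ring
    have hev2 : D.eval (Es j) (x - algebraMap Fq D.F c) = 0 := by
      rw [hrw, D.eval_add _ _ _ (hrat j) h0x h0c, D.eval_const _ _ (hrat j), hev]; ring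
    rcases (D.eval_eq_zero_iff (Es j) _ (hrat j) (hfreg c _ (hne j))).mp hev2 with h | h
    · exact absurd h (hfne c)
    · exact h
  -- fiber bound: at most μ places where x takes a given value
  have hcard : ∀ c : Fq,
      (Finset.univ.filter fun j : Fin N => D.eval (Es j) x = c).card ≤ μ := by
    intro c
    by_contra hlt
    push_neg at hlt
    obtain ⟨T, hTsub, hTcard⟩ := Finset.exists_subset_card_eq
      (n := μ + 1) (s := Finset.univ.filter fun j : Fin N => D.eval (Es j) x = c) (by omega)
    set A : D.Divisor :=
      Finsupp.single Pinf (μ : ℤ) - ∑ j ∈ T, Finsupp.single (Es j) (1 : ℤ) with hA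
    have hAdeg : D.degDiv A = -1 := by
      rw [hA, D.degDiv_sub, D.degDiv_single,
        D.degDiv_sum_single T (fun j => Es j) (fun j _ => hrat j), hTcard, hPinf]
      push_cast; ring
    have hbot : D.RRmod A = ⊥ := D.RRmod_eq_bot A (by
      rw [show (A.sum fun P n => n * (D.degPlace P : ℤ)) = D.degDiv A from rfl, hAdeg]
      norm_num)
    have hmem : x - algebraMap Fq D.F c ∈ D.RRmod A := by
      rw [D.mem_RRmod]
      right
      intro P
      have hAP : A P = Finsupp.single Pinf (μ : ℤ) P
          - ∑ j ∈ T, Finsupp.single (Es j) (1 : ℤ) P := by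
        rw [hA, Finsupp.sub_apply, Finset.sum_apply']
      by_cases hP : P = Pinf
      · have h1 : Finsupp.single Pinf (μ : ℤ) P = (μ : ℤ) := by
          rw [hP]; exact Finsupp.single_eq_same
        have h2 : ∑ j ∈ T, Finsupp.single (Es j) (1 : ℤ) P = 0 :=
          Finset.sum_eq_zero fun j _ =>
            Finsupp.single_eq_of_ne' (fun h => hne j (h.trans hP))
        rw [hAP, h1, h2, hP, hfPinf c]
        omega
      · by_cases hPT : ∃ j ∈ T, Es j = P
        · obtain ⟨j, hjT, hjP⟩ := hPT
          have h1 : Finsupp.single Pinf (μ : ℤ) P = 0 :=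
            Finsupp.single_eq_of_ne' (fun h => hP h.symm)
          have h2 : ∑ j' ∈ T, Finsupp.single (Es j') (1 : ℤ) P = 1 := by
            rw [Finset.sum_eq_single j]
            · rw [← hjP, Finsupp.single_eq_same]
            · intro j' hj' hne'
              exact Finsupp.single_eq_of_ne' (fun h => hne' (hinj (h.trans hjP.symm)))
            · intro h; exact absurd hjT h
          have hev : D.eval (Es j) x = c := (Finset.mem_filter.mp (hTsub hjT)).2
          have hv1 := heval1 c j hev
          rw [hAP, h1, h2, ← hjP]
          omega
        · push_neg at hPT
          have h1 : Finsupp.single Pinf (μ : ℤ) P = 0 :=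
            Finsupp.single_eq_of_ne' (fun h => hP h.symm)
          have h2 : ∑ j ∈ T, Finsupp.single (Es j) (1 : ℤ) P = 0 :=
            Finset.sum_eq_zero fun j hj => Finsupp.single_eq_of_ne' (hPT j hj)
          have hv0 := hfreg c P hP
          rw [hAP, h1, h2]
          omega
    rw [hbot, Submodule.mem_bot] at hmem
    exact hfne c hmem
  -- the combinatorial construction
  set key : Fin N → ℕ := fun j => ((Fintype.equivFin Fq) (D.eval (Es j) x) : ℕ) with hkeydef
  have hkey : ∀ j j' : Fin N, key j = key j' ↔ D.eval (Es j) x = D.eval (Es j') x := by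
    intro j j'
    constructor
    · intro h
      exact (Fintype.equivFin Fq).injective (Fin.val_injective h)
    · intro h
      rw [hkeydef]; simp only [h]
  set σ : Equiv.Perm (Fin N) := Tuple.sort key with hσdef
  have hmono : Monotone (key ∘ σ) := by rw [hσdef]; exact Tuple.monotone_sort key
  have hgrp : ∀ k : Fin N, (k : ℕ) % μ < μ := fun k => Nat.mod_lt _ hμpos
  set U : Fin μ → D.Divisor := fun i =>
    ∑ k ∈ Finset.univ.filter (fun k : Fin N => (k : ℕ) % μ = (i : ℕ)),
      Finsupp.single (Es (σ k)) (1 : ℤ) with hU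
  have hsupp : ∀ (i : Fin μ) (P : D.Place), P ∈ (U i).support →
      ∃ k : Fin N, (k : ℕ) % μ = (i : ℕ) ∧ Es (σ k) = P := by
    intro i P hP
    rw [Finsupp.mem_support_iff, hU, Finset.sum_apply'] at hP
    obtain ⟨k, hk, hne0⟩ := Finset.exists_ne_zero_of_sum_ne_zero hP
    refine ⟨k, (Finset.mem_filter.mp hk).2, ?_⟩
    by_contra hEs
    rw [Finsupp.single_eq_of_ne' hEs] at hne0
    exact hne0 rfl
  have hclaim : ∀ k k' : Fin N, (k : ℕ) % μ = (k' : ℕ) % μ →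
      key (σ k) = key (σ k') → k = k' := by
    have haux : ∀ k k' : Fin N, k ≤ k' → (k : ℕ) % μ = (k' : ℕ) % μ →
        key (σ k) = key (σ k') → k = k' := by
      intro k k' hle hmod hkeq
      have hle' : (k : ℕ) ≤ (k' : ℕ) := hle
      have hsub : Finset.Icc k k' ⊆
          Finset.univ.filter (fun m => key (σ m) = key (σ k)) := by
        intro m hm
        rw [Finset.mem_Icc] at hm
        rw [Finset.mem_filter]
        exact ⟨Finset.mem_univ _,
          le_antisymm ((hmono hm.2).trans_eq hkeq.symm) (hmono hm.1)⟩
      have hsetle : (Finset.univ.filter (fun m => key (σ m) = key (σ k))).card ≤ μ := by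
        refine le_trans (Finset.card_le_card_of_injOn (fun m => σ m) ?_ σ.injective.injOn)
          (hcard (D.eval (Es (σ k)) x))
        intro m hm
        rw [Finset.mem_coe, Finset.mem_filter] at hm ⊢
        exact ⟨Finset.mem_univ _, (hkey (σ m) (σ k)).mp hm.2⟩
      have hIcc : (Finset.Icc k k').card = (k' : ℕ) + 1 - (k : ℕ) := Fin.card_Icc k k'
      have h1 : (k' : ℕ) + 1 - (k : ℕ) ≤ μ := by
        rw [← hIcc]
        exact le_trans (Finset.card_le_card hsub) hsetle
      have h2 : ((k' : ℕ) - (k : ℕ)) % μ = 0 := Nat.sub_mod_eq_zero_of_mod_eq hmod.symm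
      have hlt2 : (k' : ℕ) - (k : ℕ) < μ := by omega
      have h3 : (k' : ℕ) - (k : ℕ) = 0 := by rw [← Nat.mod_eq_of_lt hlt2, h2]
      exact Fin.ext (by omega)
    intro k k' hmod hkeq
    rcases le_total k k' with h | h
    · exact haux k k' h hmod hkeq
    · exact (haux k' k h hmod.symm hkeq.symm).symm
  refine ⟨U, ?_, ?_, ?_, ?_, ?_⟩
  · -- effectivity
    intro i P
    rw [hU, Finset.sum_apply']
    apply Finset.sum_nonneg
    intro k _
    rw [Finsupp.single_apply]
    split_ifs <;> norm_num
  · -- sums to E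
    have hfib : ∀ (k : Fin N) (i : Fin μ),
        ((k : ℕ) % μ = (i : ℕ)) ↔ ((⟨(k : ℕ) % μ, hgrp k⟩ : Fin μ) = i) := by
      intro k i; rw [Fin.ext_iff]
    calc ∑ i, U i
        = ∑ i : Fin μ, ∑ k ∈ Finset.univ.filter
            (fun k : Fin N => (⟨(k : ℕ) % μ, hgrp k⟩ : Fin μ) = i),
            Finsupp.single (Es (σ k)) (1 : ℤ) := by
          rw [hU]
          refine Finset.sum_congr rfl fun i _ => Finset.sum_congr ?_ fun _ _ => rfl
          exact Finset.filter_congr fun k _ => by rw [hfib k i]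
      _ = ∑ k : Fin N, Finsupp.single (Es (σ k)) (1 : ℤ) :=
          Finset.sum_fiberwise_of_maps_to (fun k _ => Finset.mem_univ _) _
      _ = ∑ j, Finsupp.single (Es j) (1 : ℤ) :=
          Equiv.sum_comp σ (fun j => Finsupp.single (Es j) (1 : ℤ))
  · -- disjoint supports
    intro i j hij
    rw [Finset.disjoint_left]
    intro P hPi hPj
    obtain ⟨k, hk1, hk2⟩ := hsupp i P hPi
    obtain ⟨k', hk1', hk2'⟩ := hsupp j P hPj
    have hkk : k = k' := σ.injective (hinj (hk2.trans hk2'.symm))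
    exact hij (Fin.ext (by rw [← hk1, ← hk1', hkk]))
  · -- balanced degrees
    have hcardU : ∀ i : Fin μ, D.degDiv (U i)
        = ((N / μ : ℕ) : ℤ) + if (i : ℕ) < N % μ then 1 else 0 := by
      intro i
      rw [hU, D.degDiv_sum_single _ _ (fun k _ => hrat (σ k))]
      have hc : (Finset.univ.filter (fun k : Fin N => (k : ℕ) % μ = (i : ℕ))).card
          = ((Finset.range N).filter fun k => k % μ = (i : ℕ)).card := by
        apply Finset.card_bij (fun (k : Fin N) _ => (k : ℕ))
        · intro k hk
          rw [Finset.mem_filter] at hk ⊢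
          exact ⟨Finset.mem_range.mpr k.isLt, hk.2⟩
        · intro a _ b _ h
          exact Fin.ext h
        · intro m hm
          rw [Finset.mem_filter, Finset.mem_range] at hm
          exact ⟨⟨m, hm.1⟩, Finset.mem_filter.mpr ⟨Finset.mem_univ _, hm.2⟩, rfl⟩
      rw [hc, countmod μ hμpos N (i : ℕ) i.isLt]
      push_cast
      split_ifs <;> norm_num
    intro i j
    rw [hcardU i, hcardU j]
    split_ifs <;> rw [abs_le] <;> constructor <;> omega
  · -- x separates points within each part
    intro i P hPi Q hQi
    constructor
    · intro hev
      obtain ⟨k, hk1, hk2⟩ := hsupp i P hPi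
      obtain ⟨k', hk1', hk2'⟩ := hsupp i Q hQi
      have hkeq : key (σ k) = key (σ k') := by
        apply (hkey _ _).mpr
        rw [hk2, hk2']
        exact hev
      have hkk := hclaim k k' (hk1.trans hk1'.symm) hkeq
      rw [← hk2, ← hk2', hkk]
    · rintro rfl; rfl
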